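/- arXiv:2011.07932 — 6 statements merged into one kernel-verified Lean document; each statement's English description precedes it below -/
import Mathlib

section
/- Regularized Donsker–Varadhan (ReDV) representation of the KL divergence: assume KL(μ‖ν) < ∞ and f > 0 ν-almost everywhere. Let d be a metric on ℝ and let C* ∈ ℝ be any constant. Then the supremum, over all measurable functions T : Ω → ℝ such that T is μ-integrable and e^T is ν-integrable, of the quantity ∫ T dμ − log(∫ e^T dν) − d(log(∫ e^T dν), C*) equals KL(μ‖ν). -/
open MeasureTheory Real

/-- Nonnegativity of the KL divergence (Gibbs' inequality). -/
lemma integral_llr_nonneg_aux {Ω : Type*} [MeasurableSpace Ω]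
    (μ ρ : Measure Ω) [IsProbabilityMeasure μ] [IsProbabilityMeasure ρ]
    (h : μ ≪ ρ) (hint : Integrable (llr μ ρ) μ) :
    0 ≤ ∫ x, llr μ ρ x ∂μ := by
  set g : Ω → ℝ := fun x => (μ.rnDeriv ρ x).toReal with hg_def
  have hg_meas : Measurable g := (Measure.measurable_rnDeriv μ ρ).ennreal_toReal
  have hg_pos : ∀ᵐ x ∂μ, 0 < g x := by
    filter_upwards [Measure.rnDeriv_pos h, h.ae_le (Measure.rnDeriv_lt_top μ ρ)] with x h1 h2
    exact ENNReal.toReal_pos h1.ne' h2.ne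
  -- bound on the lintegral of g⁻¹
  have hlint : ∫⁻ x, ENNReal.ofReal (g x)⁻¹ ∂μ ≤ 1 := by
    rw [← lintegral_rnDeriv_mul h (show Measurable fun x => ENNReal.ofReal (g x)⁻¹ from hg_meas.inv.ennreal_ofReal).aemeasurable]
    calc ∫⁻ x, μ.rnDeriv ρ x * ENNReal.ofReal (g x)⁻¹ ∂ρ
        ≤ ∫⁻ _, 1 ∂ρ := by
          refine lintegral_mono_ae ?_
          filter_upwards [Measure.rnDeriv_lt_top μ ρ] with x hx
          rcases eq_or_ne (μ.rnDeriv ρ x) 0 with h0 | h0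
          · simp [h0]
          · have : ENNReal.ofReal (g x)⁻¹ = (μ.rnDeriv ρ x)⁻¹ := by
              rw [hg_def, ← ENNReal.toReal_inv, ENNReal.ofReal_toReal]
              simp [h0]
            rw [this, ENNReal.mul_inv_cancel h0 hx.ne]
      _ = 1 := by simp
  have hginv_int : Integrable (fun x => (g x)⁻¹) μ := by
    refine ⟨(hg_meas.inv).aestronglyMeasurable, ?_⟩
    rw [hasFiniteIntegral_iff_norm]
    calc ∫⁻ x, ENNReal.ofReal ‖(g x)⁻¹‖ ∂μ
        = ∫⁻ x, ENNReal.ofReal (g x)⁻¹ ∂μ := by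
          refine lintegral_congr fun x => ?_
          rw [Real.norm_eq_abs, abs_of_nonneg (by positivity)]
      _ ≤ 1 := hlint
      _ < ⊤ := by simp
  have hginv_le : ∫ x, (g x)⁻¹ ∂μ ≤ 1 := by
    have : ∫ x, (g x)⁻¹ ∂μ = (∫⁻ x, ENNReal.ofReal (g x)⁻¹ ∂μ).toReal := by
      rw [integral_eq_lintegral_of_nonneg_ae (Filter.Eventually.of_forall fun x => (by positivity : (0:ℝ) ≤ (g x)⁻¹))
        (show Measurable fun x => (g x)⁻¹ from hg_meas.inv).aestronglyMeasurable]
    rw [this]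
    calc (∫⁻ x, ENNReal.ofReal (g x)⁻¹ ∂μ).toReal ≤ (1 : ENNReal).toReal :=
          ENNReal.toReal_mono (by simp) hlint
      _ = 1 := by simp
  -- log y ≤ y - 1
  have key : ∫ x, -llr μ ρ x ∂μ ≤ ∫ x, ((g x)⁻¹ - 1) ∂μ := by
    refine integral_mono_ae hint.neg (hginv_int.sub (integrable_const 1)) ?_
    filter_upwards [hg_pos] with x hx
    have : -llr μ ρ x = Real.log (g x)⁻¹ := by
      rw [llr, Real.log_inv]
    rw [this]
    exact Real.log_le_sub_one_of_pos (by positivity)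
  rw [integral_neg] at key
  have : ∫ x, ((g x)⁻¹ - 1) ∂μ = ∫ x, (g x)⁻¹ ∂μ - 1 := by
    rw [integral_sub hginv_int (integrable_const 1)]
    simp
  linarith

/-- Regularized Donsker–Varadhan (ReDV) representation of the KL divergence: if
`KL(μ‖ν) = ∫ log f dμ` is finite (i.e. `log f` is μ-integrable, `f = dμ/dν`), `f > 0` ν-a.e.,
`d` is a metric on `ℝ` and `C* ∈ ℝ`, then the supremum, over all measurable `T : Ω → ℝ`
with `T` μ-integrable and `e^T` ν-integrable, of
`∫ T dμ − log (∫ e^T dν) − d (log (∫ e^T dν)) C*` equals `KL(μ‖ν)`. -/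
theorem reDV_representation
    {Ω : Type*} [MeasurableSpace Ω]
    (μ ν : Measure Ω) [IsProbabilityMeasure μ] [IsProbabilityMeasure ν]
    (hac : μ ≪ ν)
    (hKL : Integrable (fun ω => Real.log ((μ.rnDeriv ν ω).toReal)) μ)
    (hpos : ∀ᵐ ω ∂ν, 0 < ((μ.rnDeriv ν ω).toReal))
    (d : ℝ → ℝ → ℝ)
    (hd_eq : ∀ x y, d x y = 0 ↔ x = y)
    (hd_symm : ∀ x y, d x y = d y x)
    (hd_triangle : ∀ x y z, d x z ≤ d x y + d y z)
    (Cstar : ℝ) :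
    IsLUB {r : ℝ | ∃ T : Ω → ℝ, Measurable T ∧ Integrable T μ ∧
        Integrable (fun ω => Real.exp (T ω)) ν ∧
        r = ∫ ω, T ω ∂μ - Real.log (∫ ω, Real.exp (T ω) ∂ν)
            - d (Real.log (∫ ω, Real.exp (T ω) ∂ν)) Cstar}
      (∫ ω, Real.log ((μ.rnDeriv ν ω).toReal) ∂μ) := by
  have hKL' : Integrable (llr μ ν) μ := hKL
  have hd_nonneg : ∀ x y, 0 ≤ d x y := by
    intro x y
    have h1 : d x x = 0 := (hd_eq x x).mpr rfl
    have h2 := hd_triangle x y x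
    rw [h1, hd_symm y x] at h2
    linarith
  constructor
  · -- upper bound
    rintro r ⟨T, hTmeas, hTμ, hTν, rfl⟩
    set Z := ∫ ω, Real.exp (T ω) ∂ν with hZ
    have hT_DV : ∫ ω, T ω ∂μ - Real.log Z ≤ ∫ ω, llr μ ν ω ∂μ := by
      have hν0 : NeZero ν := ⟨IsProbabilityMeasure.ne_zero ν⟩
      have hprob : IsProbabilityMeasure (ν.tilted T) := isProbabilityMeasure_tilted hTν
      have hac' : μ ≪ ν.tilted T := hac.trans (absolutelyContinuous_tilted hTν)
      have hint' : Integrable (llr μ (ν.tilted T)) μ :=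
        integrable_llr_tilted_right hac hTμ hKL' hTν
      have h0 : 0 ≤ ∫ x, llr μ (ν.tilted T) x ∂μ :=
        integral_llr_nonneg_aux μ (ν.tilted T) hac' hint'
      rw [integral_llr_tilted_right hac hTμ hTν hKL'] at h0
      linarith
    have := hd_nonneg (Real.log Z) Cstar
    have heq : ∫ ω, llr μ ν ω ∂μ = ∫ ω, Real.log ((μ.rnDeriv ν ω).toReal) ∂μ := rfl
    linarith [heq ▸ hT_DV]
  · -- least upper bound: the value is attained at T = llr + Cstar
    intro b hb
    refine hb ⟨fun ω => llr μ ν ω + Cstar, (measurable_llr μ ν).add_const _,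
      hKL'.add (integrable_const _), ?_, ?_⟩
    · have : (fun ω => Real.exp (llr μ ν ω + Cstar)) =ᵐ[ν]
          fun ω => Real.exp Cstar * (μ.rnDeriv ν ω).toReal := by
        filter_upwards [hpos] with ω hω
        rw [Real.exp_add, llr, Real.exp_log hω, mul_comm]
      exact (Integrable.congr ((Measure.integrable_toReal_rnDeriv).const_mul _) this.symm)
    · have hint_exp : ∫ ω, Real.exp (llr μ ν ω + Cstar) ∂ν = Real.exp Cstar := by
        have h1 : ∫ ω, Real.exp (llr μ ν ω + Cstar) ∂ν
            = ∫ ω, Real.exp Cstar * (μ.rnDeriv ν ω).toReal ∂ν := by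
          refine integral_congr_ae ?_
          filter_upwards [hpos] with ω hω
          rw [Real.exp_add, llr, Real.exp_log hω, mul_comm]
        rw [h1, integral_const_mul, Measure.integral_toReal_rnDeriv hac]
        simp
      have hlog : Real.log (∫ ω, Real.exp (llr μ ν ω + Cstar) ∂ν) = Cstar := by
        rw [hint_exp, Real.log_exp]
      have hintμ : ∫ ω, (llr μ ν ω + Cstar) ∂μ
          = ∫ ω, llr μ ν ω ∂μ + Cstar := by
        rw [integral_add hKL' (integrable_const _)]
        simp
      rw [hlog, hintμ, (hd_eq Cstar Cstar).mpr rfl]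
      have heq : ∫ ω, llr μ ν ω ∂μ = ∫ ω, Real.log ((μ.rnDeriv ν ω).toReal) ∂μ := rfl
      rw [heq]
      ring
end

section
/- Regularized NWJ (ReNWJ) representation of the KL divergence: assume KL(μ‖ν) < ∞ and f > 0 ν-almost everywhere, and let d be a metric on ℝ. Then the supremum, over all measurable functions T : Ω → ℝ such that T is μ-integrable and e^{T−1} is ν-integrable, of the quantity ∫ T dμ − ∫ e^{T−1} dν − d(∫ e^{T−1} dν, 1) equals KL(μ‖ν). -/
open MeasureTheory Real

/-- Regularized NWJ (ReNWJ) representation of the KL divergence: if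
`KL(μ‖ν) = ∫ log f dμ` is finite (i.e. `log f` is μ-integrable, `f = dμ/dν`),
`f > 0` ν-a.e., and `d` is a metric on `ℝ`, then the supremum, over all measurable
`T : Ω → ℝ` with `T` μ-integrable and `e^(T−1)` ν-integrable, of
`∫ T dμ − ∫ e^(T−1) dν − d (∫ e^(T−1) dν) 1` equals `KL(μ‖ν)`. -/
theorem reNWJ_representation
    {Ω : Type*} [MeasurableSpace Ω]
    (μ ν : Measure Ω) [IsProbabilityMeasure μ] [IsProbabilityMeasure ν]
    (hac : μ ≪ ν)
    (hKL : Integrable (fun ω => Real.log ((μ.rnDeriv ν ω).toReal)) μ)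
    (hpos : ∀ᵐ ω ∂ν, 0 < ((μ.rnDeriv ν ω).toReal))
    (d : ℝ → ℝ → ℝ)
    (hd_eq : ∀ x y, d x y = 0 ↔ x = y)
    (hd_symm : ∀ x y, d x y = d y x)
    (hd_triangle : ∀ x y z, d x z ≤ d x y + d y z) :
    IsLUB {r : ℝ | ∃ T : Ω → ℝ, Measurable T ∧ Integrable T μ ∧
        Integrable (fun ω => Real.exp (T ω - 1)) ν ∧
        r = ∫ ω, T ω ∂μ - ∫ ω, Real.exp (T ω - 1) ∂ν
            - d (∫ ω, Real.exp (T ω - 1) ∂ν) 1}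
      (∫ ω, Real.log ((μ.rnDeriv ν ω).toReal) ∂μ) := by
  have hd_nonneg : ∀ x y, 0 ≤ d x y := by
    intro x y
    have h1 : d x x = 0 := (hd_eq x x).2 rfl
    have h2 := hd_triangle x y x
    rw [h1, hd_symm y x] at h2
    linarith
  set f : Ω → ℝ := fun ω => (μ.rnDeriv ν ω).toReal with hf
  have hfmeas : Measurable f := (Measure.measurable_rnDeriv μ ν).ennreal_toReal
  have hμpos : ∀ᵐ ω ∂μ, 0 < f ω := hac.ae_le hpos
  constructor
  · -- upper bound
    rintro r ⟨T, hTm, hTi, hTe, rfl⟩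
    have h1 : ∀ᵐ ω ∂μ, T ω - Real.log (f ω) ≤ Real.exp (T ω - 1) / f ω := by
      filter_upwards [hμpos] with ω hω
      have h := Real.add_one_le_exp (T ω - 1 - Real.log (f ω))
      rw [Real.exp_sub, Real.exp_log hω] at h
      linarith
    have hcongr : (fun ω => f ω • (Real.exp (T ω - 1) / f ω)) =ᵐ[ν]
        (fun ω => Real.exp (T ω - 1)) := by
      filter_upwards [hpos] with ω hω
      simp [smul_eq_mul, mul_div_cancel₀ _ hω.ne']
      exact mul_div_cancel₀ _ hω.ne'
    have h2 : Integrable (fun ω => Real.exp (T ω - 1) / f ω) μ := by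
      rw [← integrable_rnDeriv_smul_iff hac]
      exact hTe.congr hcongr.symm
    have h3 : ∫ ω, Real.exp (T ω - 1) / f ω ∂μ = ∫ ω, Real.exp (T ω - 1) ∂ν := by
      rw [← integral_rnDeriv_smul hac (f := fun ω => Real.exp (T ω - 1) / f ω)]
      exact integral_congr_ae hcongr
    have h4 : ∫ ω, (T ω - Real.log (f ω)) ∂μ ≤ ∫ ω, Real.exp (T ω - 1) / f ω ∂μ :=
      integral_mono_ae (hTi.sub hKL) h2 h1
    rw [integral_sub hTi hKL] at h4
    have h5 := hd_nonneg (∫ ω, Real.exp (T ω - 1) ∂ν) 1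
    rw [h3] at h4
    linarith
  · -- least
    intro b hb
    have hT0m : Measurable fun ω => Real.log (f ω) + 1 :=
      (Real.measurable_log.comp hfmeas).add measurable_const
    have hT0i : Integrable (fun ω => Real.log (f ω) + 1) μ := hKL.add (integrable_const 1)
    have hexp_eq : (fun ω => Real.exp (Real.log (f ω) + 1 - 1)) =ᵐ[ν] f := by
      filter_upwards [hpos] with ω hω
      simp [Real.exp_log hω]
      exact Real.exp_log hω
    have hT0e : Integrable (fun ω => Real.exp (Real.log (f ω) + 1 - 1)) ν :=
      (Measure.integrable_toReal_rnDeriv).congr hexp_eq.symm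
    have hint1 : ∫ ω, Real.exp (Real.log (f ω) + 1 - 1) ∂ν = 1 := by
      rw [integral_congr_ae hexp_eq, hf, Measure.integral_toReal_rnDeriv hac]
      simp
    refine hb ⟨fun ω => Real.log (f ω) + 1, hT0m, hT0i, hT0e, ?_⟩
    rw [hint1, integral_add hKL (integrable_const 1), integral_const, (hd_eq 1 1).2 rfl]
    simp
end

section
/- The micro-averaged Donsker–Varadhan estimate is strictly biased under non-constant per-batch drift: let B, N be positive integers, let T^J : Fin B × Fin N → ℝ be any array, let S : Fin N → ℝ, and let C : Fin B → ℝ be per-batch drift constants that are not all equal. Then (1/(NB)) Σ_{i,j} (T^J_{ij} + C_i) − log( (1/(NB)) Σ_{i,j} e^{S_j + C_i} ) < (1/(NB)) Σ_{i,j} T^J_{ij} − log( (1/N) Σ_{j} e^{S_j} ); indeed the difference of the two sides equals (1/B) Σ_i C_i − log( (1/B) Σ_i e^{C_i} ), which is strictly negative by the strict convexity of the exponential. -/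
open Real

lemma jensen_exp_strict {B : ℕ} (hB : 0 < B) (C : Fin B → ℝ)
    (hC : ∃ i i' : Fin B, C i ≠ C i') :
    Real.exp ((1 / (B : ℝ)) * ∑ i, C i) < (1 / (B : ℝ)) * ∑ i, Real.exp (C i) := by
  have hBpos : (0 : ℝ) < B := Nat.cast_pos.mpr hB
  have h := strictConvexOn_exp.map_sum_lt (t := Finset.univ) (w := fun _ : Fin B => 1 / (B : ℝ))
    (p := C) (fun i _ => by positivity)
    (by simp [Finset.card_univ]; field_simp)
    (fun i _ => trivial)
    (by obtain ⟨i, i', h⟩ := hC; exact ⟨i, Finset.mem_univ i, i', Finset.mem_univ i', h⟩)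
  simpa [Finset.mul_sum, smul_eq_mul] using h

/-- The micro-averaged Donsker–Varadhan estimate is strictly biased under non-constant
per-batch drift: with joint outputs `T^J`, identical-across-batches marginal outputs `S`,
and per-batch drift constants `C` that are not all equal, the pooled (micro-averaged) DV
estimate of the drifted outputs is strictly smaller than the undrifted one; indeed the
difference of the two sides is `(1/B) Σ C_i − log ((1/B) Σ e^(C_i)) < 0`. -/
theorem micro_average_drift_biased
    (B N : ℕ) (hB : 0 < B) (hN : 0 < N)
    (TJ : Fin B → Fin N → ℝ) (S : Fin N → ℝ) (C : Fin B → ℝ)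
    (hC : ∃ i i' : Fin B, C i ≠ C i') :
    ((1 / ((N : ℝ) * B)) * ∑ i, ∑ j, (TJ i j + C i)
        - Real.log ((1 / ((N : ℝ) * B)) * ∑ i, ∑ j, Real.exp (S j + C i))
      < (1 / ((N : ℝ) * B)) * ∑ i, ∑ j, TJ i j
        - Real.log ((1 / (N : ℝ)) * ∑ j, Real.exp (S j)))
    ∧ ((1 / ((N : ℝ) * B)) * ∑ i, ∑ j, (TJ i j + C i)
        - Real.log ((1 / ((N : ℝ) * B)) * ∑ i, ∑ j, Real.exp (S j + C i))
      - ((1 / ((N : ℝ) * B)) * ∑ i, ∑ j, TJ i j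
        - Real.log ((1 / (N : ℝ)) * ∑ j, Real.exp (S j)))
      = (1 / (B : ℝ)) * ∑ i, C i - Real.log ((1 / (B : ℝ)) * ∑ i, Real.exp (C i))) := by
  have hBpos : (0 : ℝ) < B := Nat.cast_pos.mpr hB
  have hNpos : (0 : ℝ) < N := Nat.cast_pos.mpr hN
  have hS : (0 : ℝ) < ∑ j, Real.exp (S j) := Finset.sum_pos (fun j _ => Real.exp_pos _) ⟨⟨0, hN⟩, Finset.mem_univ _⟩
  have hCe : (0 : ℝ) < ∑ i, Real.exp (C i) := Finset.sum_pos (fun i _ => Real.exp_pos _) ⟨⟨0, hB⟩, Finset.mem_univ _⟩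
  -- factorization of the pooled exp sum
  have hfac : (∑ i, ∑ j, Real.exp (S j + C i)) = (∑ j, Real.exp (S j)) * (∑ i, Real.exp (C i)) := by
    rw [Finset.sum_mul]
    rw [Finset.sum_comm]
    congr 1; ext j
    rw [Finset.mul_sum]
    congr 1; ext i
    rw [Real.exp_add]
  have hlog : Real.log ((1 / ((N : ℝ) * B)) * ∑ i, ∑ j, Real.exp (S j + C i))
      = Real.log ((1 / (N : ℝ)) * ∑ j, Real.exp (S j)) + Real.log ((1 / (B : ℝ)) * ∑ i, Real.exp (C i)) := by
    rw [hfac, ← Real.log_mul (by positivity) (by positivity)]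
    ring_nf
  have hsum : (∑ i, ∑ j, (TJ i j + C i)) = (∑ i, ∑ j, TJ i j) + (N : ℝ) * ∑ i, C i := by
    rw [Finset.mul_sum]
    rw [← Finset.sum_add_distrib]
    congr 1; ext i
    rw [Finset.sum_add_distrib]
    simp [mul_comm]
  have heq : (1 / ((N : ℝ) * B)) * ∑ i, ∑ j, (TJ i j + C i)
        - Real.log ((1 / ((N : ℝ) * B)) * ∑ i, ∑ j, Real.exp (S j + C i))
      - ((1 / ((N : ℝ) * B)) * ∑ i, ∑ j, TJ i j
        - Real.log ((1 / (N : ℝ)) * ∑ j, Real.exp (S j)))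
      = (1 / (B : ℝ)) * ∑ i, C i - Real.log ((1 / (B : ℝ)) * ∑ i, Real.exp (C i)) := by
    rw [hlog, hsum]
    have : (1 / ((N : ℝ) * B)) * ((N : ℝ) * ∑ i, C i) = (1 / (B : ℝ)) * ∑ i, C i := by
      field_simp
    ring_nf
    ring_nf at this
    linarith
  refine ⟨?_, heq⟩
  have hneg : (1 / (B : ℝ)) * ∑ i, C i - Real.log ((1 / (B : ℝ)) * ∑ i, Real.exp (C i)) < 0 := by
    have hj := jensen_exp_strict hB C hC
    have := Real.log_lt_log (Real.exp_pos _) hj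
    rw [Real.log_exp] at this
    linarith
  linarith
end

section
/- Contrastive learning benchmark (ground-truth MI between two samples sharing a deterministic label): let (Ω, 𝓕, P) be a probability space, X₁, X₂ : Ω → α random variables into a standard Borel measurable space α, S a finite set, and g : α → S a measurable labeling function such that Y := g ∘ X₁ = g ∘ X₂ almost surely. Assume X₁ and X₂ are conditionally independent given the σ-algebra generated by Y. Then I(X₁, X₂), defined as the Kullback–Leibler divergence of the joint law of (X₁, X₂) with respect to the product of the marginal laws of X₁ and of X₂, equals the Shannon entropy H(Y) = Σ_{s ∈ S} −P(Y = s) · log P(Y = s). -/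
open MeasureTheory Real
open scoped ENNReal

/-- Contrastive learning benchmark: let `X₁, X₂ : Ω → α` be random variables into a standard
Borel space `α`, `S` a finite set, and `g : α → S` a measurable labeling function with
`Y := g ∘ X₁ = g ∘ X₂` almost surely.  Assume `X₁` and `X₂` are conditionally independent
given `Y` (expressed elementarily, for the finite-valued conditioning variable `Y`, as the
factorization `P(X₁ ∈ A, X₂ ∈ B, Y = s) · P(Y = s) = P(X₁ ∈ A, Y = s) · P(X₂ ∈ B, Y = s)`
for all measurable `A`, `B` and all `s`, which is conditional independence given the
σ-algebra generated by `Y`).  Then `I(X₁, X₂)`, defined as the KL divergence of the joint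
law of `(X₁, X₂)` with respect to the product of the marginal laws (computed as
`∫ log (d joint / d product) d joint`), equals the Shannon entropy
`H(Y) = Σ_s −P(Y = s) log P(Y = s)`. -/
theorem contrastive_learning_benchmark
    {Ω : Type*} [MeasurableSpace Ω] (P : Measure Ω) [IsProbabilityMeasure P]
    {α : Type*} [MeasurableSpace α] [StandardBorelSpace α]
    {S : Type*} [Fintype S] [MeasurableSpace S] [MeasurableSingletonClass S]
    (X₁ X₂ : Ω → α) (hX₁ : Measurable X₁) (hX₂ : Measurable X₂)
    (g : α → S) (hg : Measurable g)
    (hY : ∀ᵐ ω ∂P, g (X₁ ω) = g (X₂ ω))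
    (hcondIndep : ∀ (A B : Set α), MeasurableSet A → MeasurableSet B → ∀ s : S,
      P ({ω | X₁ ω ∈ A} ∩ {ω | X₂ ω ∈ B} ∩ {ω | g (X₁ ω) = s}) * P {ω | g (X₁ ω) = s}
        = P ({ω | X₁ ω ∈ A} ∩ {ω | g (X₁ ω) = s})
          * P ({ω | X₂ ω ∈ B} ∩ {ω | g (X₁ ω) = s})) :
    (∫ p, Real.log
        (((P.map (fun ω => (X₁ ω, X₂ ω))).rnDeriv
            ((P.map X₁).prod (P.map X₂)) p).toReal)
      ∂(P.map (fun ω => (X₁ ω, X₂ ω))))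
    = ∑ s : S, -(P {ω | g (X₁ ω) = s}).toReal * Real.log ((P {ω | g (X₁ ω) = s}).toReal) := by
  classical
  have hpair : Measurable (fun ω => (X₁ ω, X₂ ω)) := hX₁.prodMk hX₂
  haveI hμprob : IsProbabilityMeasure (P.map (fun ω => (X₁ ω, X₂ ω))) :=
    Measure.isProbabilityMeasure_map hpair.aemeasurable
  haveI : IsProbabilityMeasure (P.map X₁) := Measure.isProbabilityMeasure_map hX₁.aemeasurable
  haveI : IsProbabilityMeasure (P.map X₂) := Measure.isProbabilityMeasure_map hX₂.aemeasurable
  set p : S → ℝ≥0∞ := fun s => P {ω | g (X₁ ω) = s} with hp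
  set μ : Measure (α × α) := P.map (fun ω => (X₁ ω, X₂ ω)) with hμ
  set ν : Measure (α × α) := (P.map X₁).prod (P.map X₂) with hν
  set f : α × α → ℝ≥0∞ :=
    fun q => ∑ s : S, ((g ⁻¹' {s}) ×ˢ (g ⁻¹' {s})).indicator (fun _ => (p s)⁻¹) q with hf
  have hblock : ∀ s : S, MeasurableSet ((g ⁻¹' {s}) ×ˢ (g ⁻¹' {s}) : Set (α × α)) :=
    fun s => (hg (measurableSet_singleton s)).prod (hg (measurableSet_singleton s))
  have hf_meas : Measurable f := by
    apply Finset.measurable_sum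
    intro s _
    exact measurable_const.indicator (hblock s)
  have hYs : ∀ s : S, MeasurableSet {ω | g (X₁ ω) = s} :=
    fun s => (hg.comp hX₁) (measurableSet_singleton s)
  have hnull : P {ω | ¬ g (X₁ ω) = g (X₂ ω)} = 0 := ae_iff.1 hY
  have hswap : ∀ (B : Set α) (s : S),
      P ({ω | X₂ ω ∈ B} ∩ {ω | g (X₂ ω) = s}) = P ({ω | X₂ ω ∈ B} ∩ {ω | g (X₁ ω) = s}) := by
    intro B s
    apply measure_congr
    rw [Filter.eventuallyEq_set]
    filter_upwards [hY] with ω h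
    simp [Set.mem_inter_iff, h]
  -- key computation on rectangles
  have hkey : ∀ A B : Set α, MeasurableSet A → MeasurableSet B →
      μ (A ×ˢ B) = ν.withDensity f (A ×ˢ B) := by
    intro A B hA hB
    have hμrect : μ (A ×ˢ B) = P ({ω | X₁ ω ∈ A} ∩ {ω | X₂ ω ∈ B}) := by
      rw [hμ, Measure.map_apply hpair (hA.prod hB)]
      rfl
    rw [withDensity_apply _ (hA.prod hB)]
    have hint : ∫⁻ q in A ×ˢ B, f q ∂ν
        = ∑ s : S, (p s)⁻¹ * ν (((g ⁻¹' {s}) ×ˢ (g ⁻¹' {s})) ∩ A ×ˢ B) := by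
      rw [hf]
      rw [lintegral_finset_sum _ (fun s _ => measurable_const.indicator (hblock s))]
      refine Finset.sum_congr rfl fun s _ => ?_
      rw [lintegral_indicator (hblock s) _, setLIntegral_const,
        Measure.restrict_apply (hblock s)]
    rw [hint]
    have hterm : ∀ s : S, (p s)⁻¹ * ν (((g ⁻¹' {s}) ×ˢ (g ⁻¹' {s})) ∩ A ×ˢ B)
        = P ({ω | X₁ ω ∈ A} ∩ {ω | X₂ ω ∈ B} ∩ {ω | g (X₁ ω) = s}) := by
      intro s
      have hrect : (((g ⁻¹' {s}) ×ˢ (g ⁻¹' {s})) ∩ A ×ˢ B)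
          = ((g ⁻¹' {s}) ∩ A) ×ˢ ((g ⁻¹' {s}) ∩ B) := by
        rw [Set.prod_inter_prod]
      rw [hrect, hν, Measure.prod_prod, Measure.map_apply hX₁ ((hg (measurableSet_singleton s)).inter hA),
        Measure.map_apply hX₂ ((hg (measurableSet_singleton s)).inter hB)]
      have e1 : X₁ ⁻¹' ((g ⁻¹' {s}) ∩ A) = {ω | X₁ ω ∈ A} ∩ {ω | g (X₁ ω) = s} := by
        ext ω; simp [and_comm]
      have e2 : X₂ ⁻¹' ((g ⁻¹' {s}) ∩ B) = {ω | X₂ ω ∈ B} ∩ {ω | g (X₂ ω) = s} := by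
        ext ω; simp [and_comm]
      rw [e1, e2, hswap B s]
      rcases eq_or_ne (p s) 0 with h0 | h0
      · have h1 : P ({ω | X₁ ω ∈ A} ∩ {ω | g (X₁ ω) = s}) = 0 :=
          measure_mono_null Set.inter_subset_right h0
        have h2 : P ({ω | X₁ ω ∈ A} ∩ {ω | X₂ ω ∈ B} ∩ {ω | g (X₁ ω) = s}) = 0 :=
          measure_mono_null Set.inter_subset_right h0
        simp [h1, h2]
      · have htop : p s ≠ ⊤ := measure_ne_top P _
        rw [← hcondIndep A B hA hB s]
        calc (p s)⁻¹ * (P ({ω | X₁ ω ∈ A} ∩ {ω | X₂ ω ∈ B} ∩ {ω | g (X₁ ω) = s}) * p s)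
            = P ({ω | X₁ ω ∈ A} ∩ {ω | X₂ ω ∈ B} ∩ {ω | g (X₁ ω) = s}) * ((p s)⁻¹ * p s) := by
              ring
          _ = P ({ω | X₁ ω ∈ A} ∩ {ω | X₂ ω ∈ B} ∩ {ω | g (X₁ ω) = s}) := by
              rw [ENNReal.inv_mul_cancel h0 htop, mul_one]
    simp_rw [hterm]
    have hcover : ({ω | X₁ ω ∈ A} ∩ {ω | X₂ ω ∈ B})
        = ⋃ s : S, ({ω | X₁ ω ∈ A} ∩ {ω | X₂ ω ∈ B} ∩ {ω | g (X₁ ω) = s}) := by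
      ext ω; simp
    have hdisj : Pairwise (Function.onFun Disjoint
        fun s : S => {ω | X₁ ω ∈ A} ∩ {ω | X₂ ω ∈ B} ∩ {ω | g (X₁ ω) = s}) := by
      intro s t hst
      refine Set.disjoint_left.2 fun ω h1 h2 => hst ?_
      exact h1.2.symm.trans h2.2
    have hPsum : P ({ω | X₁ ω ∈ A} ∩ {ω | X₂ ω ∈ B})
        = ∑ s : S, P ({ω | X₁ ω ∈ A} ∩ {ω | X₂ ω ∈ B} ∩ {ω | g (X₁ ω) = s}) := by
      conv_lhs => rw [hcover]
      rw [measure_iUnion hdisj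
        (fun s => (((hX₁ hA).inter (hX₂ hB)).inter (hYs s))), tsum_fintype]
    rw [hμrect, hPsum]
  -- identify the joint law with the density measure
  have hμeq : μ = ν.withDensity f := by
    refine ext_of_generate_finite _ generateFrom_prod.symm isPiSystem_prod ?_ ?_
    · rintro _ ⟨A, hA, B, hB, rfl⟩
      exact hkey A B hA hB
    · have := hkey Set.univ Set.univ MeasurableSet.univ MeasurableSet.univ
      simpa [Set.univ_prod_univ] using this
  have hrn : μ.rnDeriv ν =ᵐ[ν] f := by
    have := Measure.rnDeriv_withDensity ν hf_meas
    rw [← hμeq] at this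
    exact this
  have hac : μ ≪ ν := by
    rw [hμeq]; exact withDensity_absolutelyContinuous ν f
  have hrnμ : ∀ᵐ q ∂μ, μ.rnDeriv ν q = f q := hac.ae_le hrn
  have hDset : MeasurableSet {q : α × α | g q.1 = g q.2} :=
    measurableSet_eq_fun (hg.comp measurable_fst) (hg.comp measurable_snd)
  have hμdiag : ∀ᵐ q ∂μ, g q.1 = g q.2 := by
    rw [hμ, ae_map_iff hpair.aemeasurable hDset]
    exact hY
  have hpmeas : Measurable fun q : α × α => p (g q.1) :=
    (measurable_of_countable p).comp (hg.comp measurable_fst)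
  have hμpos : ∀ᵐ q ∂μ, p (g q.1) ≠ 0 := by
    have hs : MeasurableSet {q : α × α | p (g q.1) ≠ 0} :=
      hpmeas (measurableSet_singleton 0).compl
    rw [hμ, ae_map_iff hpair.aemeasurable hs]
    rw [ae_iff]
    have hcov : {ω | ¬ (fun ω => p (g (X₁ ω)) ≠ 0) ω}
        = ⋃ s ∈ {s : S | p s = 0}, {ω | g (X₁ ω) = s} := by
      ext ω
      simp only [Set.mem_setOf_eq, not_not, Set.mem_iUnion]
      constructor
      · intro h; exact ⟨g (X₁ ω), h, rfl⟩
      · rintro ⟨s, hs0, hgs⟩; rw [hgs]; exact hs0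
    rw [hcov]
    exact (measure_biUnion_null_iff (Set.to_countable _)).2 fun s hs => hs
  have hlogeq : ∀ᵐ q ∂μ,
      Real.log ((μ.rnDeriv ν q).toReal) = -Real.log ((p (g q.1)).toReal) := by
    filter_upwards [hrnμ, hμdiag, hμpos] with q h1 h2 _
    rw [h1]
    have hfval : f q = (p (g q.1))⁻¹ := by
      have hfq : f q = ∑ s : S, ((g ⁻¹' {s}) ×ˢ (g ⁻¹' {s})).indicator (fun _ => (p s)⁻¹) q := rfl
      rw [hfq, Finset.sum_eq_single (g q.1)]
      · exact Set.indicator_of_mem (Set.mem_prod.2 ⟨by simp, by simp [h2.symm]⟩) _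
      · intro s _ hs
        apply Set.indicator_of_notMem
        intro hq
        exact hs (Set.mem_singleton_iff.1 (Set.mem_prod.1 hq).1).symm
      · simp
    rw [hfval, ENNReal.toReal_inv, Real.log_inv]
  have hgX : Measurable fun ω => g (X₁ ω) := hg.comp hX₁
  have hsm : AEStronglyMeasurable (fun q : α × α => -Real.log ((p (g q.1)).toReal)) μ :=
    ((Real.measurable_log.comp (ENNReal.measurable_toReal.comp hpmeas)).neg).aestronglyMeasurable
  calc (∫ q, Real.log ((μ.rnDeriv ν q).toReal) ∂μ)
      = ∫ q, -Real.log ((p (g q.1)).toReal) ∂μ := integral_congr_ae hlogeq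
    _ = ∫ ω, -Real.log ((p (g (X₁ ω))).toReal) ∂P := by
        rw [hμ] at hsm ⊢
        rw [integral_map hpair.aemeasurable hsm]
    _ = ∫ s, -Real.log ((p s).toReal) ∂(P.map (fun ω => g (X₁ ω))) := by
        rw [integral_map hgX.aemeasurable]
        exact ((Real.measurable_log.comp
          (ENNReal.measurable_toReal.comp (measurable_of_countable p))).neg).aestronglyMeasurable
    _ = ∑ s : S, ((P.map (fun ω => g (X₁ ω))) {s}).toReal • (-Real.log ((p s).toReal)) := by
        haveI : IsProbabilityMeasure (P.map (fun ω => g (X₁ ω))) :=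
          Measure.isProbabilityMeasure_map hgX.aemeasurable
        exact integral_fintype (Integrable.of_finite)
    _ = ∑ s : S, -(p s).toReal * Real.log ((p s).toReal) := by
        refine Finset.sum_congr rfl fun s _ => ?_
        rw [Measure.map_apply hgX (measurableSet_singleton s)]
        have : (fun ω => g (X₁ ω)) ⁻¹' {s} = {ω | g (X₁ ω) = s} := by ext ω; simp
        rw [this]
        simp only [smul_eq_mul]
        ring
end

section
/- Approximation of the ReDV value by bounded critics: assume KL(μ‖ν) < ∞ and f > 0 ν-almost everywhere, let d be a metric on ℝ and C* ∈ ℝ. Then for every η > 0 there exists a bounded measurable function T : Ω → ℝ (in particular T is μ-integrable and e^T is ν-integrable) such that KL(μ‖ν) − η ≤ ∫ T dμ − log(∫ e^T dν) − d(log(∫ e^T dν), C*) ≤ KL(μ‖ν). -/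
open MeasureTheory Real

open Filter in
private lemma clamp_tendsto (x : ℝ) :
    Filter.Tendsto (fun n : ℕ => max (-(n : ℝ)) (min (n : ℝ) x)) Filter.atTop (nhds x) := by
  have h : ∀ᶠ n : ℕ in Filter.atTop, max (-(n : ℝ)) (min (n : ℝ) x) = x := by
    filter_upwards [Filter.eventually_ge_atTop ⌈|x|⌉₊] with n hn
    have hxn : |x| ≤ (n : ℝ) := (Nat.le_ceil _).trans (by exact_mod_cast hn)
    rw [abs_le] at hxn
    rw [min_eq_right hxn.2, max_eq_right hxn.1]
  exact Filter.Tendsto.congr' (h.mono fun n hn => hn.symm) tendsto_const_nhds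

private lemma clamp_abs_le (n : ℕ) (x : ℝ) : |max (-(n : ℝ)) (min (n : ℝ) x)| ≤ |x| := by
  have hn : (0 : ℝ) ≤ n := n.cast_nonneg
  rw [abs_le]
  constructor
  · exact le_max_of_le_right (le_min (le_trans (neg_nonpos_of_nonneg (abs_nonneg x)) hn)
      (neg_abs_le x))
  · exact max_le (le_trans (neg_nonpos_of_nonneg hn) (abs_nonneg x))
      ((min_le_right _ _).trans (le_abs_self x))

/-- Approximation of the ReDV value by bounded critics: if `KL(μ‖ν) = ∫ log f dμ` is finite
(i.e. `log f` is μ-integrable, `f = dμ/dν`), `f > 0` ν-a.e., `d` is a metric on `ℝ` and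
`C* ∈ ℝ`, then for every `η > 0` there is a bounded measurable `T : Ω → ℝ` (in particular
`T` is μ-integrable and `e^T` is ν-integrable) with
`KL(μ‖ν) − η ≤ ∫ T dμ − log (∫ e^T dν) − d (log (∫ e^T dν)) C* ≤ KL(μ‖ν)`. -/
theorem reDV_approximation_by_bounded_critics
    {Ω : Type*} [MeasurableSpace Ω]
    (μ ν : Measure Ω) [IsProbabilityMeasure μ] [IsProbabilityMeasure ν]
    (hac : μ ≪ ν)
    (hKL : Integrable (fun ω => Real.log ((μ.rnDeriv ν ω).toReal)) μ)
    (hpos : ∀ᵐ ω ∂ν, 0 < ((μ.rnDeriv ν ω).toReal))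
    (d : ℝ → ℝ → ℝ)
    (hd_eq : ∀ x y, d x y = 0 ↔ x = y)
    (hd_symm : ∀ x y, d x y = d y x)
    (hd_triangle : ∀ x y z, d x z ≤ d x y + d y z)
    (Cstar : ℝ) :
    ∀ η > (0 : ℝ), ∃ T : Ω → ℝ, Measurable T ∧ (∃ B : ℝ, ∀ ω, |T ω| ≤ B) ∧
      Integrable T μ ∧ Integrable (fun ω => Real.exp (T ω)) ν ∧
      (∫ ω, Real.log ((μ.rnDeriv ν ω).toReal) ∂μ) - η
        ≤ ∫ ω, T ω ∂μ - Real.log (∫ ω, Real.exp (T ω) ∂ν)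
            - d (Real.log (∫ ω, Real.exp (T ω) ∂ν)) Cstar
      ∧ ∫ ω, T ω ∂μ - Real.log (∫ ω, Real.exp (T ω) ∂ν)
            - d (Real.log (∫ ω, Real.exp (T ω) ∂ν)) Cstar
        ≤ ∫ ω, Real.log ((μ.rnDeriv ν ω).toReal) ∂μ := by
  intro η hη
  set f : Ω → ℝ := fun ω => (μ.rnDeriv ν ω).toReal with hf_def
  set L : Ω → ℝ := fun ω => Real.log (f ω) with hL_def
  have hf_meas : Measurable f := (Measure.measurable_rnDeriv μ ν).ennreal_toReal
  have hL_meas : Measurable L := Real.measurable_log.comp hf_meas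
  set KL : ℝ := ∫ ω, L ω ∂μ with hKL_def
  -- truncated critics
  set Tn : ℕ → Ω → ℝ := fun n ω => max (-(n : ℝ)) (min (n : ℝ) (L ω)) with hTn_def
  have hTn_meas : ∀ n, Measurable (Tn n) := fun n =>
    measurable_const.max (measurable_const.min hL_meas)
  have hTn_bdd : ∀ n ω, |Tn n ω| ≤ (n : ℝ) := by
    intro n ω
    have hn : (0 : ℝ) ≤ n := n.cast_nonneg
    rw [abs_le]
    exact ⟨le_max_left _ _, max_le (by linarith) (min_le_left _ _)⟩
  have hTn_int : ∀ n, Integrable (Tn n) μ := by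
    intro n
    refine (integrable_const (n : ℝ)).mono' (hTn_meas n).aestronglyMeasurable ?_
    exact Filter.Eventually.of_forall fun ω => by simpa using hTn_bdd n ω
  have hexpTn_int : ∀ n, Integrable (fun ω => Real.exp (Tn n ω)) ν := by
    intro n
    refine (integrable_const (Real.exp n)).mono'
      ((Real.measurable_exp.comp (hTn_meas n)).aestronglyMeasurable) ?_
    refine Filter.Eventually.of_forall fun ω => ?_
    rw [Real.norm_eq_abs, abs_of_pos (Real.exp_pos _)]
    exact Real.exp_le_exp.mpr ((le_abs_self _).trans (hTn_bdd n ω))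
  -- integrals of truncations converge to KL
  have hA : Filter.Tendsto (fun n => ∫ ω, Tn n ω ∂μ) Filter.atTop (nhds KL) := by
    refine tendsto_integral_of_dominated_convergence (fun ω => |L ω|)
      (fun n => (hTn_meas n).aestronglyMeasurable) hKL.abs ?_ ?_
    · exact fun n => Filter.Eventually.of_forall fun ω => by
        simpa using clamp_abs_le n (L ω)
    · exact Filter.Eventually.of_forall fun ω => clamp_tendsto (L ω)
  -- integrals of exp of truncations converge to 1
  have hf_int : Integrable f ν := Measure.integrable_toReal_rnDeriv
  have hI : Filter.Tendsto (fun n => ∫ ω, Real.exp (Tn n ω) ∂ν) Filter.atTop (nhds 1) := by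
    have h1 : (∫ ω, f ω ∂ν) = 1 := by
      rw [Measure.integral_toReal_rnDeriv hac]; simp
    rw [← h1]
    refine tendsto_integral_of_dominated_convergence (fun ω => 1 + f ω)
      (fun n => (Real.measurable_exp.comp (hTn_meas n)).aestronglyMeasurable)
      ((integrable_const 1).add hf_int) ?_ ?_
    · intro n
      filter_upwards [hpos] with ω hω
      rw [Real.norm_eq_abs, abs_of_pos (Real.exp_pos _)]
      have hclamp : Tn n ω ≤ max 0 (L ω) :=
        max_le (neg_nonpos_of_nonneg n.cast_nonneg |>.trans (le_max_left _ _))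
          ((min_le_right _ _).trans (le_max_right _ _))
      calc Real.exp (Tn n ω) ≤ Real.exp (max 0 (L ω)) := Real.exp_le_exp.mpr hclamp
        _ = max 1 (Real.exp (L ω)) := by
            rw [Monotone.map_max Real.exp_monotone, Real.exp_zero]
        _ = max 1 (f ω) := by rw [Real.exp_log hω]
        _ ≤ 1 + f ω := max_le (by linarith [hω.le]) (by linarith)
    · filter_upwards [hpos] with ω hω
      have := (Real.continuous_exp.continuousAt (x := L ω)).tendsto.comp (clamp_tendsto (L ω))
      rwa [Function.comp_def, Real.exp_log hω] at this
  have hB : Filter.Tendsto (fun n => Real.log (∫ ω, Real.exp (Tn n ω) ∂ν))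
      Filter.atTop (nhds 0) := by
    have := ((Real.continuousAt_log one_ne_zero).tendsto.comp hI)
    rwa [Real.log_one] at this
  have hAB : Filter.Tendsto
      (fun n => (∫ ω, Tn n ω ∂μ) - Real.log (∫ ω, Real.exp (Tn n ω) ∂ν))
      Filter.atTop (nhds KL) := by
    simpa using hA.sub hB
  obtain ⟨n, hn⟩ := (hAB.eventually_const_le (by linarith : KL - η < KL)).exists
  -- notation for this n
  set A : ℝ := ∫ ω, Tn n ω ∂μ with hA_def
  set I : ℝ := ∫ ω, Real.exp (Tn n ω) ∂ν with hI_def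
  have hIpos : 0 < I := by
    have hmono : Real.exp (-(n : ℝ)) ≤ I := by
      have : (∫ _ω, Real.exp (-(n : ℝ)) ∂ν) ≤ I :=
        integral_mono (integrable_const _) (hexpTn_int n)
          (fun ω => Real.exp_le_exp.mpr (le_max_left _ _))
      simpa using this
    exact lt_of_lt_of_le (Real.exp_pos _) hmono
  -- Donsker–Varadhan upper bound via Jensen
  have hae : ∀ᵐ ω ∂ν, f ω • Real.exp (Tn n ω - L ω) = Real.exp (Tn n ω) := by
    filter_upwards [hpos] with ω hω
    rw [smul_eq_mul, Real.exp_sub, Real.exp_log hω]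
    field_simp
    rfl
  have hg_int : Integrable (fun ω => Tn n ω - L ω) μ := (hTn_int n).sub hKL
  have hsmul_int : Integrable (fun ω => f ω • Real.exp (Tn n ω - L ω)) ν :=
    (hexpTn_int n).congr (hae.mono fun ω h => h.symm)
  have hexpg_int : Integrable (fun ω => Real.exp (Tn n ω - L ω)) μ :=
    (integrable_rnDeriv_smul_iff hac).mp hsmul_int
  have hchange : (∫ ω, Real.exp (Tn n ω - L ω) ∂μ) = I := by
    rw [← integral_rnDeriv_smul hac (f := fun ω => Real.exp (Tn n ω - L ω))]
    exact integral_congr_ae hae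
  have hjensen : Real.exp (∫ ω, (Tn n ω - L ω) ∂μ) ≤ I := by
    rw [← hchange]
    exact convexOn_exp.map_integral_le Real.continuous_exp.continuousOn isClosed_univ
      (Filter.Eventually.of_forall fun _ => Set.mem_univ _) hg_int hexpg_int
  have hDV : A - Real.log I ≤ KL := by
    have hsub : (∫ ω, (Tn n ω - L ω) ∂μ) = A - KL := integral_sub (hTn_int n) hKL
    have := Real.log_le_log (Real.exp_pos _) hjensen
    rw [Real.log_exp, hsub] at this
    linarith
  -- the final critic: shift by a constant to kill the penalty term
  set c : ℝ := Cstar - Real.log I with hc_def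
  refine ⟨fun ω => Tn n ω + c, (hTn_meas n).add_const c, ⟨(n : ℝ) + |c|, fun ω => ?_⟩,
    ?_, ?_, ?_, ?_⟩
  · exact (abs_add_le _ _).trans (add_le_add_left (hTn_bdd n ω) _)
  · exact (hTn_int n).add (integrable_const c)
  · simp_rw [Real.exp_add]
    exact (hexpTn_int n).mul_const _
  all_goals {
    have hint_T : (∫ ω, (Tn n ω + c) ∂μ) = A + c := by
      rw [integral_add (hTn_int n) (integrable_const c), integral_const]; simp; rfl
    have hint_expT : (∫ ω, Real.exp (Tn n ω + c) ∂ν) = I * Real.exp c := by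
      simp_rw [Real.exp_add]
      rw [integral_mul_const]
    have hlog : Real.log (∫ ω, Real.exp (Tn n ω + c) ∂ν) = Cstar := by
      rw [hint_expT, Real.log_mul (ne_of_gt hIpos) (Real.exp_ne_zero c), Real.log_exp,
        hc_def]
      ring
    have hd0 : d Cstar Cstar = 0 := (hd_eq _ _).mpr rfl
    rw [hint_T, hlog, hd0, hc_def]
    try linarith
  }
end

section
/- Estimation lemma for ReMINE (almost-sure convergence of the empirical value over a compact parameter set): let Ω be a measurable space, μ and ν probability measures on Ω, Θ ⊂ ℝ^d a compact set, and T : Θ × Ω → ℝ a jointly measurable function that is continuous in θ for each fixed ω and satisfies |T(θ, ω)| ≤ M for all θ, ω. Fix C* ∈ ℝ and let d₀ be the absolute-value distance on ℝ. Let (X_i)_{i≥1} be i.i.d. with law μ and (Y_i)_{i≥1} be i.i.d. with law ν, independent of each other, and define Î_n = sup_{θ ∈ Θ} [ (1/n) Σ_{i≤n} T(θ, X_i) − log( (1/n) Σ_{i≤n} e^{T(θ, Y_i)} ) − d₀( log( (1/n) Σ_{i≤n} e^{T(θ, Y_i)} ), C* ) ] and Î = sup_{θ ∈ Θ} [ ∫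 T(θ, ·) dμ − log(∫ e^{T(θ, ·)} dν) − d₀( log(∫ e^{T(θ, ·)} dν), C* ) ]. Then almost surely, for every η > 0 there exists N ∈ ℕ such that for all n ≥ N, |Î_n − Î| ≤ η. -/
open MeasureTheory ProbabilityTheory Real Filter Topology

namespace ReMINEAux

variable {Ωa : Type*} [MeasurableSpace Ωa]

lemma integrable_of_bdd {μ : Measure Ωa} [IsFiniteMeasure μ] {g : Ωa → ℝ} {M : ℝ}
    (hg : Measurable g) (h : ∀ ω, |g ω| ≤ M) : Integrable g μ :=
  ⟨hg.aestronglyMeasurable, HasFiniteIntegral.of_bounded (C := M)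
    (ae_of_all _ fun ω => by simpa [Real.norm_eq_abs] using h ω)⟩

lemma ciSup_eq_ciSup_dense {E : Type*} [MetricSpace E] {s c : Set E} {g : E → ℝ} {M : ℝ}
    (hc : c ⊆ s) (hd : s ⊆ closure c) (hcn : c.Nonempty)
    (hcont : ContinuousOn g s) (hba : ∀ x ∈ s, g x ≤ M) :
    ⨆ x : s, g x.1 = ⨆ x : c, g x.1 := by
  have hsn : s.Nonempty := hcn.mono hc
  haveI : Nonempty ↥s := hsn.to_subtype
  haveI : Nonempty ↥c := hcn.to_subtype
  have bdds : BddAbove (Set.range fun x : s => g x.1) := by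
    refine ⟨M, ?_⟩; rintro _ ⟨x, rfl⟩; exact hba x.1 x.2
  have bddc : BddAbove (Set.range fun x : c => g x.1) := by
    refine ⟨M, ?_⟩; rintro _ ⟨x, rfl⟩; exact hba x.1 (hc x.2)
  refine le_antisymm (ciSup_le fun x => ?_) (ciSup_le fun x => le_ciSup bdds ⟨x.1, hc x.2⟩)
  have hxc : (x : E) ∈ closure c := hd x.2
  haveI hne : (𝓝[c] (x : E)).NeBot := mem_closure_iff_nhdsWithin_neBot.mp hxc
  have ht : Tendsto g (𝓝[c] (x : E)) (𝓝 (g x.1)) := (hcont x.1 x.2).mono hc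
  refine le_of_tendsto ht ?_
  filter_upwards [self_mem_nhdsWithin] with y hy
  exact le_ciSup bddc ⟨y, hy⟩

variable {d : ℕ}

/-- local supremum of the critic family over a ball intersected with `K` -/
noncomputable def usup (f : EuclideanSpace ℝ (Fin d) → Ωa → ℝ)
    (K : Set (EuclideanSpace ℝ (Fin d))) (c : EuclideanSpace ℝ (Fin d)) (r : ℝ) (ω : Ωa) : ℝ :=
  ⨆ x : ↥(K ∩ Metric.ball c r), f x.1 ω

variable {f : EuclideanSpace ℝ (Fin d) → Ωa → ℝ} {K : Set (EuclideanSpace ℝ (Fin d))}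
  {c : EuclideanSpace ℝ (Fin d)} {r M : ℝ}

lemma le_usup (hbdd : ∀ θ ∈ K, ∀ ω, |f θ ω| ≤ M) {θ : EuclideanSpace ℝ (Fin d)}
    (hθ : θ ∈ K ∩ Metric.ball c r) (ω : Ωa) : f θ ω ≤ usup f K c r ω :=
  le_ciSup (f := fun x : ↥(K ∩ Metric.ball c r) => f x.1 ω)
    ⟨M, by rintro _ ⟨x, rfl⟩; exact (abs_le.1 (hbdd x.1 x.2.1 ω)).2⟩ ⟨θ, hθ⟩

lemma usup_le (hc : c ∈ K) (hr : 0 < r) (hbdd : ∀ θ ∈ K, ∀ ω, |f θ ω| ≤ M) (ω : Ωa) :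
    usup f K c r ω ≤ M := by
  haveI : Nonempty ↥(K ∩ Metric.ball c r) := ⟨⟨c, hc, Metric.mem_ball_self hr⟩⟩
  exact ciSup_le fun x => (abs_le.1 (hbdd x.1 x.2.1 ω)).2

lemma abs_usup_le (hc : c ∈ K) (hr : 0 < r) (hbdd : ∀ θ ∈ K, ∀ ω, |f θ ω| ≤ M) (ω : Ωa) :
    |usup f K c r ω| ≤ M := by
  refine abs_le.2 ⟨?_, usup_le hc hr hbdd ω⟩
  exact le_trans (abs_le.1 (hbdd c hc ω)).1
    (le_usup hbdd ⟨hc, Metric.mem_ball_self hr⟩ ω)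

lemma measurable_usup (hc : c ∈ K) (hr : 0 < r)
    (hmeas : Measurable (Function.uncurry f))
    (hcont : ∀ ω, ContinuousOn (fun θ => f θ ω) K)
    (hbdd : ∀ θ ∈ K, ∀ ω, |f θ ω| ≤ M) :
    Measurable (usup f K c r) := by
  obtain ⟨t, hts, htc, htd⟩ :=
    (TopologicalSpace.IsSeparable.of_separableSpace (K ∩ Metric.ball c r)).exists_countable_dense_subset
  have htn : t.Nonempty := by
    rcases t.eq_empty_or_nonempty with rfl | h
    · exfalso
      have : c ∈ closure (∅ : Set (EuclideanSpace ℝ (Fin d))) :=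
        htd ⟨hc, Metric.mem_ball_self hr⟩
      simpa using this
    · exact h
  have heq : usup f K c r = fun ω => ⨆ x : t, f x.1 ω := by
    funext ω
    exact ciSup_eq_ciSup_dense hts htd htn
      ((hcont ω).mono Set.inter_subset_left)
      (fun x hx => (abs_le.1 (hbdd x hx.1 ω)).2)
  rw [heq]
  haveI : Countable ↥t := htc.to_subtype
  exact Measurable.iSup fun x => hmeas.of_uncurry_left

lemma tendsto_usup_pointwise (hc : c ∈ K)
    (hcont : ∀ ω, ContinuousOn (fun θ => f θ ω) K)
    (hbdd : ∀ θ ∈ K, ∀ ω, |f θ ω| ≤ M) (ω : Ωa) :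
    Tendsto (fun k : ℕ => usup f K c (1 / (k + 1)) ω) atTop (𝓝 (f c ω)) := by
  rw [Metric.tendsto_atTop]
  intro ε hε
  obtain ⟨δ, hδ, hδ'⟩ := Metric.continuousWithinAt_iff.1 (hcont ω c hc) (ε / 2) (half_pos hε)
  obtain ⟨k₀, hk₀⟩ := exists_nat_gt (1 / δ)
  refine ⟨k₀, fun k hk => ?_⟩
  have hk1 : (0 : ℝ) < (k : ℝ) + 1 := by positivity
  have hrδ : 1 / ((k : ℝ) + 1) < δ := by
    refine (one_div_lt hk1 hδ).2 (lt_of_lt_of_le hk₀ ?_)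
    have : (k₀ : ℝ) ≤ (k : ℝ) := by exact_mod_cast hk
    linarith
  have hub : usup f K c (1 / ((k : ℝ) + 1)) ω ≤ f c ω + ε / 2 := by
    haveI : Nonempty ↥(K ∩ Metric.ball c (1 / ((k : ℝ) + 1))) :=
      ⟨⟨c, hc, Metric.mem_ball_self (by positivity)⟩⟩
    refine ciSup_le fun x => ?_
    have hd : dist (x : EuclideanSpace ℝ (Fin d)) c < δ := lt_trans x.2.2 hrδ
    have := hδ' x.2.1 hd
    rw [Real.dist_eq] at this
    linarith [(abs_le.1 this.le).2]
  have hlb : f c ω ≤ usup f K c (1 / ((k : ℝ) + 1)) ω :=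
    le_usup hbdd ⟨hc, Metric.mem_ball_self (by positivity)⟩ ω
  rw [Real.dist_eq, abs_sub_lt_iff]
  constructor <;> linarith

lemma tendsto_integral_usup {μ : Measure Ωa} [IsProbabilityMeasure μ] (hc : c ∈ K)
    (hmeas : Measurable (Function.uncurry f))
    (hcont : ∀ ω, ContinuousOn (fun θ => f θ ω) K)
    (hbdd : ∀ θ ∈ K, ∀ ω, |f θ ω| ≤ M) :
    Tendsto (fun k : ℕ => ∫ ω, usup f K c (1 / (k + 1)) ω ∂μ) atTop
      (𝓝 (∫ ω, f c ω ∂μ)) := by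
  refine tendsto_integral_of_dominated_convergence (fun _ => M)
    (fun k => (measurable_usup hc (by positivity) hmeas hcont hbdd).aestronglyMeasurable)
    (integrable_const M)
    (fun k => ae_of_all _ fun ω => ?_)
    (ae_of_all _ (tendsto_usup_pointwise hc hcont hbdd))
  simpa [Real.norm_eq_abs] using abs_usup_le hc (by positivity) hbdd ω

lemma integrable_usup {μ : Measure Ωa} [IsProbabilityMeasure μ] (hc : c ∈ K) (hr : 0 < r)
    (hmeas : Measurable (Function.uncurry f))
    (hcont : ∀ ω, ContinuousOn (fun θ => f θ ω) K)
    (hbdd : ∀ θ ∈ K, ∀ ω, |f θ ω| ≤ M) :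
    Integrable (usup f K c r) μ :=
  integrable_of_bdd (measurable_usup hc hr hmeas hcont hbdd) (abs_usup_le hc hr hbdd)

lemma slln_comp {μ : Measure Ωa} {Ω' : Type*} [MeasurableSpace Ω'] {P : Measure Ω'}
    [IsProbabilityMeasure P]
    {X : ℕ → Ω' → Ωa} (hXm : ∀ i, Measurable (X i)) (hXlaw : ∀ i, P.map (X i) = μ)
    (hXind : Pairwise fun i j => IndepFun (X i) (X j) P)
    {U : Ωa → ℝ} (hU : Measurable U) {M : ℝ} (hUb : ∀ ω, |U ω| ≤ M) :
    ∀ᵐ ω' ∂P, Tendsto (fun n : ℕ => (∑ i ∈ Finset.range n, U (X i ω')) / n) atTop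
      (𝓝 (∫ ω, U ω ∂μ)) := by
  have key := strong_law_ae_real (μ := P) (fun i => U ∘ X i)
    (integrable_of_bdd (hU.comp (hXm 0)) (fun ω => hUb _))
    (fun i j hij => (hXind hij).comp hU hU)
    (fun i => IdentDistrib.comp ⟨(hXm i).aemeasurable, (hXm 0).aemeasurable,
      by rw [hXlaw i, hXlaw 0]⟩ hU)
  have hint : ∫ ω, U ω ∂μ = ∫ x, (U ∘ X 0) x ∂P := by
    rw [← hXlaw 0]
    exact integral_map (hXm 0).aemeasurable hU.aestronglyMeasurable
  rw [hint]
  simpa [Function.comp] using key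

lemma ulln_one_sided {μ : Measure Ωa} [IsProbabilityMeasure μ]
    {K : Set (EuclideanSpace ℝ (Fin d))} (hK : IsCompact K)
    {f : EuclideanSpace ℝ (Fin d) → Ωa → ℝ}
    (hmeas : Measurable (Function.uncurry f))
    (hcont : ∀ ω, ContinuousOn (fun θ => f θ ω) K)
    {M : ℝ} (hbdd : ∀ θ ∈ K, ∀ ω, |f θ ω| ≤ M)
    {Ω' : Type*} [MeasurableSpace Ω'] {P : Measure Ω'} [IsProbabilityMeasure P]
    {X : ℕ → Ω' → Ωa} (hXm : ∀ i, Measurable (X i)) (hXlaw : ∀ i, P.map (X i) = μ)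
    (hXind : Pairwise fun i j => IndepFun (X i) (X j) P) :
    ∀ᵐ ω' ∂P, ∀ ε > (0 : ℝ), ∃ N : ℕ, ∀ n ≥ N, ∀ θ ∈ K,
      (∑ i ∈ Finset.range n, f θ (X i ω')) / n - ∫ ω, f θ ω ∂μ ≤ ε := by
  rcases K.eq_empty_or_nonempty with rfl | hKne
  · filter_upwards with ω' ε hε
    exact ⟨0, fun n _ θ hθ => absurd hθ (Set.notMem_empty θ)⟩
  -- negated family
  set g : EuclideanSpace ℝ (Fin d) → Ωa → ℝ := fun θ ω => -(f θ ω) with hg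
  have hmeasg : Measurable (Function.uncurry g) := hmeas.neg
  have hcontg : ∀ ω, ContinuousOn (fun θ => g θ ω) K := fun ω => (hcont ω).neg
  have hbddg : ∀ θ ∈ K, ∀ ω, |g θ ω| ≤ M := fun θ hθ ω => by
    simpa [hg, abs_neg] using hbdd θ hθ ω
  -- choose radii
  have key : ∀ (m : ℕ) (c : ↥K), ∃ r > (0 : ℝ),
      (∫ ω, usup f K c.1 r ω ∂μ ≤ ∫ ω, f c.1 ω ∂μ + 1 / (m + 1)) ∧
      (∫ ω, usup g K c.1 r ω ∂μ ≤ ∫ ω, g c.1 ω ∂μ + 1 / (m + 1)) := by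
    intro m c
    have hεm : (0 : ℝ) < 1 / (m + 1) := by positivity
    have h1 := (tendsto_integral_usup (μ := μ) c.2 hmeas hcont hbdd).eventually_lt_const
      (lt_add_of_pos_right _ hεm)
    have h2 := (tendsto_integral_usup (μ := μ) c.2 hmeasg hcontg hbddg).eventually_lt_const
      (lt_add_of_pos_right _ hεm)
    obtain ⟨k, hk1, hk2⟩ := (h1.and h2).exists
    exact ⟨1 / (k + 1), by positivity, hk1.le, hk2.le⟩
  choose rad hrad hIf hIg using key
  -- finite subcover for each m
  have cover : ∀ m : ℕ, ∃ t : Finset ↥K, K ⊆ ⋃ c ∈ t, Metric.ball c.1 (rad m c) := fun m =>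
    hK.elim_finite_subcover (fun c : ↥K => Metric.ball c.1 (rad m c))
      (fun c => Metric.isOpen_ball)
      (fun x hx => Set.mem_iUnion.2 ⟨⟨x, hx⟩, Metric.mem_ball_self (hrad m _)⟩)
  choose t ht using cover
  -- almost sure SLLN event
  have hae : ∀ᵐ ω' ∂P, ∀ m : ℕ, ∀ c ∈ t m,
      Tendsto (fun n : ℕ => (∑ i ∈ Finset.range n, usup f K c.1 (rad m c) (X i ω')) / n)
        atTop (𝓝 (∫ ω, usup f K c.1 (rad m c) ω ∂μ)) := by
    rw [ae_all_iff]
    intro m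
    have haem : ∀ᵐ ω' ∂P, ∀ c : {c : ↥K // c ∈ t m},
        Tendsto (fun n : ℕ => (∑ i ∈ Finset.range n, usup f K c.1.1 (rad m c.1) (X i ω')) / n)
          atTop (𝓝 (∫ ω, usup f K c.1.1 (rad m c.1) ω ∂μ)) :=
      ae_all_iff.2 fun c => slln_comp hXm hXlaw hXind
        (measurable_usup c.1.2 (hrad m c.1) hmeas hcont hbdd)
        (abs_usup_le c.1.2 (hrad m c.1) hbdd)
    filter_upwards [haem] with ω' h c hc
    exact h ⟨c, hc⟩
  filter_upwards [hae] with ω' hω'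
  intro ε hε
  obtain ⟨m, hm⟩ := exists_nat_ge (3 / ε)
  have hm1 : 3 / ε ≤ (m : ℝ) + 1 := hm.trans (by linarith)
  have hεm : (1 : ℝ) / (m + 1) ≤ ε / 3 := by
    calc (1 : ℝ) / (m + 1) ≤ 1 / (3 / ε) := one_div_le_one_div_of_le (by positivity) hm1
    _ = ε / 3 := one_div_div _ _
  have hNev : ∀ᶠ n : ℕ in atTop, ∀ c ∈ t m,
      (∑ i ∈ Finset.range n, usup f K c.1 (rad m c) (X i ω')) / n
        ≤ ∫ ω, usup f K c.1 (rad m c) ω ∂μ + 1 / (m + 1) := by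
    rw [eventually_all_finset]
    intro c hc
    exact ((hω' m c hc).eventually_lt_const
      (lt_add_of_pos_right _ (by positivity))).mono fun n h => h.le
  obtain ⟨N, hN⟩ := eventually_atTop.1 hNev
  refine ⟨N, fun n hn θ hθ => ?_⟩
  obtain ⟨c, hct, hcball⟩ := Set.mem_iUnion₂.1 (ht m hθ)
  have hθs : θ ∈ K ∩ Metric.ball c.1 (rad m c) := ⟨hθ, hcball⟩
  have e1 : (∑ i ∈ Finset.range n, f θ (X i ω')) / n
      ≤ (∑ i ∈ Finset.range n, usup f K c.1 (rad m c) (X i ω')) / n := by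
    rw [div_eq_mul_inv, div_eq_mul_inv]
    exact mul_le_mul_of_nonneg_right
      (Finset.sum_le_sum fun i _ => le_usup hbdd hθs _) (by positivity)
  have e2 := hN n hn c hct
  have e3 := hIf m c
  have e4 : ∫ ω, f c.1 ω ∂μ - 1 / (m + 1) ≤ ∫ ω, f θ ω ∂μ := by
    have i1 : ∫ ω, g θ ω ∂μ ≤ ∫ ω, usup g K c.1 (rad m c) ω ∂μ :=
      integral_mono
        (integrable_of_bdd hmeasg.of_uncurry_left (fun ω => hbddg θ hθ ω))
        (integrable_usup c.2 (hrad m c) hmeasg hcontg hbddg)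
        (fun ω => le_usup hbddg hθs ω)
    have i2 := hIg m c
    have e5 : ∫ ω, g θ ω ∂μ = -∫ ω, f θ ω ∂μ := by
      simp [hg, integral_neg]
    have e6 : ∫ ω, g c.1 ω ∂μ = -∫ ω, f c.1 ω ∂μ := by
      simp [hg, integral_neg]
    rw [e5] at i1
    rw [e6] at i2
    linarith
  linarith

lemma ulln {μ : Measure Ωa} [IsProbabilityMeasure μ]
    {K : Set (EuclideanSpace ℝ (Fin d))} (hK : IsCompact K)
    {f : EuclideanSpace ℝ (Fin d) → Ωa → ℝ}
    (hmeas : Measurable (Function.uncurry f))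
    (hcont : ∀ ω, ContinuousOn (fun θ => f θ ω) K)
    {M : ℝ} (hbdd : ∀ θ ∈ K, ∀ ω, |f θ ω| ≤ M)
    {Ω' : Type*} [MeasurableSpace Ω'] {P : Measure Ω'} [IsProbabilityMeasure P]
    {X : ℕ → Ω' → Ωa} (hXm : ∀ i, Measurable (X i)) (hXlaw : ∀ i, P.map (X i) = μ)
    (hXind : Pairwise fun i j => IndepFun (X i) (X j) P) :
    ∀ᵐ ω' ∂P, ∀ ε > (0 : ℝ), ∃ N : ℕ, ∀ n ≥ N, ∀ θ ∈ K,
      |(∑ i ∈ Finset.range n, f θ (X i ω')) / n - ∫ ω, f θ ω ∂μ| ≤ ε := by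
  have hmeasg : Measurable (Function.uncurry fun θ ω => -(f θ ω)) := hmeas.neg
  have hcontg : ∀ ω, ContinuousOn (fun θ => -(f θ ω)) K := fun ω => (hcont ω).neg
  have hbddg : ∀ θ ∈ K, ∀ ω, |(-(f θ ω))| ≤ M := fun θ hθ ω => by
    simpa [abs_neg] using hbdd θ hθ ω
  filter_upwards [ulln_one_sided hK hmeas hcont hbdd hXm hXlaw hXind,
    ulln_one_sided hK hmeasg hcontg hbddg hXm hXlaw hXind] with ω' h1 h2
  intro ε hε
  obtain ⟨N₁, hN₁⟩ := h1 ε hε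
  obtain ⟨N₂, hN₂⟩ := h2 ε hε
  refine ⟨max N₁ N₂, fun n hn θ hθ => ?_⟩
  have b1 := hN₁ n (le_trans (le_max_left _ _) hn) θ hθ
  have b2 := hN₂ n (le_trans (le_max_right _ _) hn) θ hθ
  have conv : (∑ i ∈ Finset.range n, -(f θ (X i ω'))) / n - ∫ ω, -(f θ ω) ∂μ
      = -((∑ i ∈ Finset.range n, f θ (X i ω')) / n - ∫ ω, f θ ω ∂μ) := by
    rw [integral_neg, Finset.sum_neg_distrib, neg_div]
    ring
  rw [conv] at b2
  rw [abs_le]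
  constructor <;> linarith

lemma log_lip {a b c : ℝ} (hc : 0 < c) (ha : c ≤ a) (hb : c ≤ b) :
    |Real.log a - Real.log b| ≤ c⁻¹ * |a - b| := by
  have key : ∀ x y : ℝ, c ≤ x → c ≤ y → y ≤ x →
      Real.log x - Real.log y ≤ c⁻¹ * (x - y) := by
    intro x y hx hy hyx
    have hy0 : 0 < y := lt_of_lt_of_le hc hy
    have hx0 : 0 < x := lt_of_lt_of_le hc hx
    have h1 : Real.log x - Real.log y = Real.log (x / y) := by
      rw [Real.log_div hx0.ne' hy0.ne']
    have h2 : Real.log (x / y) ≤ x / y - 1 := Real.log_le_sub_one_of_pos (by positivity)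
    have h3 : x / y - 1 = (x - y) / y := by field_simp
    have h4 : (x - y) / y ≤ c⁻¹ * (x - y) := by
      rw [div_eq_mul_inv, mul_comm]
      exact mul_le_mul_of_nonneg_right (by
        exact inv_anti₀ hc hy) (by linarith)
    linarith
  rcases le_total b a with h | h
  · have h0 : Real.log b ≤ Real.log a := Real.log_le_log (lt_of_lt_of_le hc hb) h
    rw [abs_of_nonneg (by linarith), abs_of_nonneg (by linarith)]
    exact key a b ha hb h
  · have h0 : Real.log a ≤ Real.log b := Real.log_le_log (lt_of_lt_of_le hc ha) h
    rw [abs_of_nonpos (by linarith), abs_of_nonpos (by linarith)]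
    have := key b a hb ha h
    linarith

lemma abs_ciSup_sub_ciSup_le {ι : Sort*} [Nonempty ι] {f g : ι → ℝ} {c : ℝ}
    (hf : BddAbove (Set.range f)) (hg : BddAbove (Set.range g))
    (h : ∀ i, |f i - g i| ≤ c) : |(⨆ i, f i) - ⨆ i, g i| ≤ c := by
  rw [abs_le]
  constructor
  · have : (⨆ i, g i) ≤ (⨆ i, f i) + c :=
      ciSup_le fun i => by
        have := (abs_le.1 (h i)).1
        have hfi := le_ciSup hf i
        linarith
    linarith
  · have : (⨆ i, f i) ≤ (⨆ i, g i) + c :=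
      ciSup_le fun i => by
        have := (abs_le.1 (h i)).2
        have hgi := le_ciSup hg i
        linarith
    linarith

end ReMINEAux
/-- Estimation lemma for ReMINE: over a compact parameter set `Θ ⊆ ℝ^d`, with a jointly
measurable critic family `T` that is continuous in `θ` and uniformly bounded by `M`, and
with `(X_i)` i.i.d. of law `μ` and `(Y_i)` i.i.d. of law `ν`, independent of each other,
the empirical ReMINE value `Î_n` (with absolute-value regularizer towards `C*`) converges
almost surely to the population value `Î`: almost surely, for every `η > 0` there is `N`
such that `|Î_n − Î| ≤ η` for all `n ≥ N`. -/
theorem remine_estimation_lemma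
    {Ω : Type*} [MeasurableSpace Ω]
    (μ ν : Measure Ω) [IsProbabilityMeasure μ] [IsProbabilityMeasure ν]
    (d : ℕ) (Θ : Set (EuclideanSpace ℝ (Fin d))) (hΘ : IsCompact Θ)
    (T : EuclideanSpace ℝ (Fin d) → Ω → ℝ) (M : ℝ)
    (hTmeas : Measurable (Function.uncurry T))
    (hTcont : ∀ ω, ContinuousOn (fun θ => T θ ω) Θ)
    (hTbdd : ∀ θ ∈ Θ, ∀ ω, |T θ ω| ≤ M)
    (Cstar : ℝ)
    {Ω' : Type*} [MeasurableSpace Ω'] (P : Measure Ω') [IsProbabilityMeasure P]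
    (X Y : ℕ → Ω' → Ω)
    (hXmeas : ∀ i, Measurable (X i)) (hYmeas : ∀ i, Measurable (Y i))
    (hXlaw : ∀ i, P.map (X i) = μ) (hYlaw : ∀ i, P.map (Y i) = ν)
    (hindep : iIndepFun (Sum.elim X Y) P) :
    ∀ᵐ ω' ∂P, ∀ η > (0 : ℝ), ∃ N : ℕ, ∀ n ≥ N,
      |(⨆ θ : Θ,
          ((1 / (n : ℝ)) * ∑ i ∈ Finset.range n, T θ.1 (X i ω')
            - Real.log ((1 / (n : ℝ)) * ∑ i ∈ Finset.range n, Real.exp (T θ.1 (Y i ω')))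
            - |Real.log ((1 / (n : ℝ)) * ∑ i ∈ Finset.range n, Real.exp (T θ.1 (Y i ω')))
                - Cstar|))
        - (⨆ θ : Θ,
          (∫ ω, T θ.1 ω ∂μ - Real.log (∫ ω, Real.exp (T θ.1 ω) ∂ν)
            - |Real.log (∫ ω, Real.exp (T θ.1 ω) ∂ν) - Cstar|))| ≤ η := by
  have hXind : Pairwise fun i j => IndepFun (X i) (X j) P := fun i j hij =>
    hindep.indepFun (show (Sum.inl i : ℕ ⊕ ℕ) ≠ Sum.inl j from fun h => hij (Sum.inl.inj h))
  have hYind : Pairwise fun i j => IndepFun (Y i) (Y j) P := fun i j hij =>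
    hindep.indepFun (show (Sum.inr i : ℕ ⊕ ℕ) ≠ Sum.inr j from fun h => hij (Sum.inr.inj h))
  have hSmeas : Measurable (Function.uncurry fun θ ω => Real.exp (T θ ω)) :=
    Real.measurable_exp.comp hTmeas
  have hScont : ∀ ω, ContinuousOn (fun θ => Real.exp (T θ ω)) Θ := fun ω =>
    Real.continuous_exp.comp_continuousOn (hTcont ω)
  have hSbdd : ∀ θ ∈ Θ, ∀ ω, |Real.exp (T θ ω)| ≤ Real.exp M := fun θ hθ ω => by
    rw [abs_of_pos (Real.exp_pos _)]
    exact Real.exp_le_exp.2 (abs_le.1 (hTbdd θ hθ ω)).2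
  filter_upwards [ReMINEAux.ulln hΘ hTmeas hTcont hTbdd hXmeas hXlaw hXind,
    ReMINEAux.ulln hΘ hSmeas hScont hSbdd hYmeas hYlaw hYind] with ω' h1 h2
  intro η hη
  rcases Θ.eq_empty_or_nonempty with hemp | ⟨θ₀, hθ₀⟩
  · refine ⟨0, fun n _ => ?_⟩
    haveI : IsEmpty ↥Θ := by rw [hemp]; infer_instance
    rw [Real.iSup_of_isEmpty, Real.iSup_of_isEmpty]
    simpa using hη.le
  haveI : Nonempty ↥Θ := ⟨⟨θ₀, hθ₀⟩⟩
  have hexpM : (0 : ℝ) < Real.exp M := Real.exp_pos M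
  set ε₂ : ℝ := η / (4 * Real.exp M + 1) with hε₂def
  have hε₂ : 0 < ε₂ := by positivity
  obtain ⟨N₁, hN₁⟩ := h1 (η / 2) (by linarith)
  obtain ⟨N₂, hN₂⟩ := h2 ε₂ hε₂
  refine ⟨max (max N₁ N₂) 1, fun n hn => ?_⟩
  have hn1 : 1 ≤ n := le_trans (le_max_right _ _) hn
  have hnpos : (0 : ℝ) < n := by exact_mod_cast hn1
  have hnN₁ : N₁ ≤ n := le_trans (le_trans (le_max_left _ _) (le_max_left _ _)) hn
  have hnN₂ : N₂ ≤ n := le_trans (le_trans (le_max_right _ _) (le_max_left _ _)) hn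
  simp only [one_div, inv_mul_eq_div]
  -- pointwise facts
  have hAn_le : ∀ θ ∈ Θ, (∑ i ∈ Finset.range n, T θ (X i ω')) / (n : ℝ) ≤ M := by
    intro θ hθ
    have hsum : ∑ i ∈ Finset.range n, T θ (X i ω') ≤ (n : ℝ) * M := by
      have := Finset.sum_le_card_nsmul (Finset.range n) (fun i => T θ (X i ω')) M
        (fun i _ => (abs_le.1 (hTbdd θ hθ _)).2)
      simpa [Finset.card_range, nsmul_eq_mul] using this
    rw [div_le_iff₀ hnpos, mul_comm]
    exact hsum
  have hA_le : ∀ θ ∈ Θ, ∫ ω, T θ ω ∂μ ≤ M := by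
    intro θ hθ
    have := integral_mono (μ := μ)
      (ReMINEAux.integrable_of_bdd hTmeas.of_uncurry_left (hTbdd θ hθ))
      (integrable_const M) (fun ω => (abs_le.1 (hTbdd θ hθ ω)).2)
    simpa [measure_univ] using this
  have hBn_lb : ∀ θ ∈ Θ, Real.exp (-M)
      ≤ (∑ i ∈ Finset.range n, Real.exp (T θ (Y i ω'))) / (n : ℝ) := by
    intro θ hθ
    have hsum : (n : ℝ) * Real.exp (-M) ≤ ∑ i ∈ Finset.range n, Real.exp (T θ (Y i ω')) := by
      have := Finset.card_nsmul_le_sum (Finset.range n) (fun i => Real.exp (T θ (Y i ω')))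
        (Real.exp (-M)) (fun i _ => Real.exp_le_exp.2 (abs_le.1 (hTbdd θ hθ _)).1)
      simpa [Finset.card_range, nsmul_eq_mul] using this
    rw [le_div_iff₀ hnpos, mul_comm]
    exact hsum
  have hB_lb : ∀ θ ∈ Θ, Real.exp (-M) ≤ ∫ ω, Real.exp (T θ ω) ∂ν := by
    intro θ hθ
    have := integral_mono (μ := ν) (integrable_const (Real.exp (-M)))
      (ReMINEAux.integrable_of_bdd hSmeas.of_uncurry_left (hSbdd θ hθ))
      (fun ω => Real.exp_le_exp.2 (abs_le.1 (hTbdd θ hθ ω)).1)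
    simpa [measure_univ] using this
  have hlogBn_ge : ∀ θ ∈ Θ, -M ≤ Real.log
      ((∑ i ∈ Finset.range n, Real.exp (T θ (Y i ω'))) / (n : ℝ)) := by
    intro θ hθ
    have := Real.log_le_log (Real.exp_pos (-M)) (hBn_lb θ hθ)
    rwa [Real.log_exp] at this
  have hlogB_ge : ∀ θ ∈ Θ, -M ≤ Real.log (∫ ω, Real.exp (T θ ω) ∂ν) := by
    intro θ hθ
    have := Real.log_le_log (Real.exp_pos (-M)) (hB_lb θ hθ)
    rwa [Real.log_exp] at this
  refine ReMINEAux.abs_ciSup_sub_ciSup_le ⟨2 * M, ?_⟩ ⟨2 * M, ?_⟩ ?_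
  · rintro _ ⟨θ, rfl⟩
    have h5 := hAn_le θ.1 θ.2
    have h6 := hlogBn_ge θ.1 θ.2
    have h7 : (0:ℝ) ≤ |Real.log ((∑ i ∈ Finset.range n, Real.exp (T θ.1 (Y i ω'))) / (n : ℝ))
        - Cstar| := abs_nonneg _
    dsimp only
    linarith
  · rintro _ ⟨θ, rfl⟩
    have h5 := hA_le θ.1 θ.2
    have h6 := hlogB_ge θ.1 θ.2
    have h7 : (0:ℝ) ≤ |Real.log (∫ ω, Real.exp (T θ.1 ω) ∂ν) - Cstar| := abs_nonneg _
    dsimp only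
    linarith
  · intro θ
    have hA := hN₁ n hnN₁ θ.1 θ.2
    have hB := hN₂ n hnN₂ θ.1 θ.2
    have hlog : |Real.log ((∑ i ∈ Finset.range n, Real.exp (T θ.1 (Y i ω'))) / (n : ℝ))
        - Real.log (∫ ω, Real.exp (T θ.1 ω) ∂ν)| ≤ Real.exp M * ε₂ := by
      have hlip := ReMINEAux.log_lip (Real.exp_pos (-M)) (hBn_lb θ.1 θ.2) (hB_lb θ.1 θ.2)
      rw [Real.exp_neg, inv_inv] at hlip
      exact hlip.trans (mul_le_mul_of_nonneg_left hB hexpM.le)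
    have hd : abs (|Real.log ((∑ i ∈ Finset.range n, Real.exp (T θ.1 (Y i ω'))) / (n : ℝ)) - Cstar|
        - |Real.log (∫ ω, Real.exp (T θ.1 ω) ∂ν) - Cstar|)
        ≤ |Real.log ((∑ i ∈ Finset.range n, Real.exp (T θ.1 (Y i ω'))) / (n : ℝ))
          - Real.log (∫ ω, Real.exp (T θ.1 ω) ∂ν)| := by
      refine le_trans (abs_abs_sub_abs_le_abs_sub _ _) (le_of_eq ?_)
      rw [sub_sub_sub_cancel_right]
    have hexpε : Real.exp M * ε₂ ≤ η / 4 := by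
      rw [hε₂def, ← mul_div_assoc, div_le_div_iff₀ (by positivity) (by norm_num)]
      nlinarith [hη.le, hexpM.le]
    have hA1 := abs_le.1 hA
    have hlog1 := abs_le.1 hlog
    have hd1 := abs_le.1 hd
    rw [abs_le]
    constructor <;> linarith
end
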